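/- arXiv:1003.5073 — 4 statements merged into one kernel-verified Lean document; each statement's English description precedes it below -/
import Mathlib

section
/- Let W be a nonnegative real random variable such that for all t > 0, P(W ≤ t) = ∫₀ᵗ P(W > t − v) · v^(−1/α) dv, where α ∈ (1,2] and 1/α + 1/β = 1. Then for every s > 0, the Laplace transform satisfies E[e^(−sW)] = 1 / (1 + c_β s^(1/β)) with c_β = 1/Γ(1/β). -/
open MeasureTheory Filter Set
open scoped ENNReal

set_option maxHeartbeats 1000000

/-- If a nonnegative random variable `W` satisfies the convolution equation
`P(W ≤ t) = ∫₀ᵗ P(W > t - v) v^(-1/α) dv` for all `t > 0`, where `α ∈ (1,2]` and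
`1/α + 1/β = 1`, then its Laplace transform is `E[e^{-sW}] = 1/(1 + s^(1/β)/Γ(1/β))`. -/
theorem stmt0 {Ω : Type*} [MeasurableSpace Ω] (P : Measure Ω) [IsProbabilityMeasure P]
    (W : Ω → ℝ) (hWmeas : Measurable W) (hWnn : ∀ ω, 0 ≤ W ω)
    (α β : ℝ) (hα : α ∈ Set.Ioc (1:ℝ) 2) (hβ : 1/α + 1/β = 1)
    (heq : ∀ t > (0:ℝ), (P {ω | W ω ≤ t}).toReal
      = ∫ v in Set.Ioo (0:ℝ) t, (P {ω | t - v < W ω}).toReal * v ^ (-(1/α))) :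
    ∀ s > (0:ℝ),
      ∫ ω, Real.exp (-(s * W ω)) ∂P
        = 1 / (1 + (1 / Real.Gamma (1/β)) * s ^ (1/β)) := by
  intro s hs
  obtain ⟨hα1, _hα2⟩ := hα
  have hαpos : (0:ℝ) < α := lt_trans one_pos hα1
  have hia : (0:ℝ) < 1/α := by positivity
  have hia1 : 1/α < 1 := by rw [div_lt_one hαpos]; exact hα1
  have hib : 1/β = 1 - 1/α := by linarith
  have hibpos : (0:ℝ) < 1/β := by rw [hib]; linarith
  -- basic objects
  set G : ℝ → ℝ≥0∞ := fun t => P {ω | t < W ω} with hGdef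
  set Fm : ℝ → ℝ≥0∞ := fun t => P {ω | W ω ≤ t} with hFdef
  have hGmeas : Measurable G :=
    Antitone.measurable (fun a b hab => measure_mono (fun ω h => lt_of_le_of_lt hab h))
  have hFmeas : Measurable Fm :=
    Monotone.measurable (fun a b hab => measure_mono (fun ω h => le_trans h hab))
  have hsetW : ∀ t : ℝ, MeasurableSet {ω | W ω ≤ t} := fun t => hWmeas measurableSet_Iic
  have hFG : ∀ t, Fm t + G t = 1 := by
    intro t
    have hc : {ω | W ω ≤ t}ᶜ = {ω | t < W ω} := by ext ω; simp [not_le]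
    have := measure_add_measure_compl (μ := P) (hsetW t)
    rw [hc] at this
    simpa using this
  have hG1 : ∀ t, G t ≤ 1 := fun t => prob_le_one
  -- the ENNReal version of the convolution hypothesis
  have hrint : ∀ t : ℝ, 0 < t → IntegrableOn (fun v : ℝ => v ^ (-(1/α))) (Ioo 0 t) := by
    intro t ht
    have h1 := intervalIntegral.intervalIntegrable_rpow' (a := 0) (b := t) (r := -(1/α))
      (by linarith)
    exact ((intervalIntegrable_iff_integrableOn_Ioc_of_le ht.le).mp h1).mono_set
      Ioo_subset_Ioc_self
  have hrpowmeas : Measurable (fun v : ℝ => v ^ (-(1/α))) := by measurability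
  have hhmeas : ∀ t : ℝ, Measurable (fun v => (G (t - v)).toReal * v ^ (-(1/α))) := by
    intro t
    exact ((hGmeas.comp (measurable_const.sub measurable_id)).ennreal_toReal).mul hrpowmeas
  have hGtoReal_le : ∀ u : ℝ, (G u).toReal ≤ 1 := by
    intro u
    have := ENNReal.toReal_mono (by simp) (hG1 u)
    simpa using this
  have hint : ∀ t : ℝ, 0 < t →
      IntegrableOn (fun v => (G (t - v)).toReal * v ^ (-(1/α))) (Ioo 0 t) := by
    intro t ht
    apply Integrable.mono' (hrint t ht) ((hhmeas t).aestronglyMeasurable.restrict)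
    filter_upwards [ae_restrict_mem measurableSet_Ioo] with v hv
    have h0 : (0:ℝ) ≤ v ^ (-(1/α)) := Real.rpow_nonneg hv.1.le _
    rw [Real.norm_eq_abs, abs_of_nonneg (mul_nonneg ENNReal.toReal_nonneg h0)]
    exact mul_le_of_le_one_left h0 (hGtoReal_le _)
  have heq' : ∀ t : ℝ, 0 < t →
      Fm t = ∫⁻ v in Ioo 0 t, G (t - v) * ENNReal.ofReal (v ^ (-(1/α))) := by
    intro t ht
    have h0 : ENNReal.ofReal ((Fm t).toReal) = Fm t := ENNReal.ofReal_toReal (measure_ne_top _ _)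
    rw [← h0]
    have h1 : (Fm t).toReal = ∫ v in Ioo (0:ℝ) t, (G (t - v)).toReal * v ^ (-(1/α)) := heq t ht
    rw [h1, ofReal_integral_eq_lintegral_ofReal (hint t ht) ?_]
    · apply lintegral_congr_ae
      filter_upwards [ae_restrict_mem measurableSet_Ioo] with v _hv
      rw [ENNReal.ofReal_mul ENNReal.toReal_nonneg, ENNReal.ofReal_toReal (measure_ne_top _ _)]
    · filter_upwards [ae_restrict_mem measurableSet_Ioo] with v hv
      exact mul_nonneg ENNReal.toReal_nonneg (Real.rpow_nonneg hv.1.le _)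
  -- integrability of the Laplace integrand
  have hexp_le_one : ∀ ω, Real.exp (-(s * W ω)) ≤ 1 := by
    intro ω
    rw [Real.exp_le_one_iff]
    have := mul_nonneg hs.le (hWnn ω)
    linarith
  have hexp_int : Integrable (fun ω => Real.exp (-(s * W ω))) P := by
    have hm : Measurable (fun ω => Real.exp (-(s * W ω))) :=
      Real.measurable_exp.comp ((hWmeas.const_mul s).neg)
    apply Integrable.mono' (integrable_const (1:ℝ)) hm.aestronglyMeasurable
    filter_upwards with ω
    rw [Real.norm_eq_abs, abs_of_pos (Real.exp_pos _)]
    exact hexp_le_one ω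
  set L := ∫ ω, Real.exp (-(s * W ω)) ∂P with hL
  have hint1 : Integrable (fun ω => (1:ℝ) - Real.exp (-(s * W ω))) P :=
    (integrable_const 1).sub hexp_int
  have h1mL : ∫ ω, (1 - Real.exp (-(s * W ω))) ∂P = 1 - L := by
    rw [integral_sub (integrable_const 1) hexp_int, integral_const]
    simp
    exact hL.symm
  have h1mL_nn : 0 ≤ 1 - L := by
    rw [← h1mL]
    apply integral_nonneg
    intro ω
    have := hexp_le_one ω
    simp only [Pi.zero_apply]
    linarith
  -- the three key lintegrals
  set B := ∫⁻ t in Ioi (0:ℝ), ENNReal.ofReal (Real.exp (-(s*t))) * G t with hB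
  set A := ∫⁻ t in Ioi (0:ℝ), ENNReal.ofReal (Real.exp (-(s*t))) * Fm t with hA
  have hg1meas : Measurable (fun t : ℝ => ENNReal.ofReal (Real.exp (-(s*t)))) :=
    (Real.measurable_exp.comp ((measurable_id.const_mul s).neg)).ennreal_ofReal
  -- exp integral over Ioi 0
  have hexpIoi_int : IntegrableOn (fun t : ℝ => Real.exp (-(s*t))) (Ioi 0) := by
    have h := integrableOn_rpow_mul_exp_neg_mul_rpow (p := 1) (s := 0) (b := s)
      (by norm_num) one_pos hs
    apply h.congr_fun ?_ measurableSet_Ioi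
    intro x _hx
    simp only [Real.rpow_zero, Real.rpow_one, one_mul, neg_mul]
  have hexp1 : ∫⁻ t in Ioi (0:ℝ), ENNReal.ofReal (Real.exp (-(s*t))) = ENNReal.ofReal (1/s) := by
    have hval : ∫ t in Ioi (0:ℝ), Real.exp (-(s*t)) = 1/s := by
      have h := Real.integral_rpow_mul_exp_neg_mul_Ioi (a := 1) (r := s) one_pos hs
      simp only [sub_self, Real.rpow_zero, one_mul, Real.rpow_one, Real.Gamma_one,
        mul_one] at h
      rw [h]
    rw [← ofReal_integral_eq_lintegral_ofReal hexpIoi_int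
      (Filter.Eventually.of_forall (fun t => (Real.exp_pos _).le)), hval]
  have hBfin : B ≠ ⊤ := by
    have hle : B ≤ ENNReal.ofReal (1/s) := by
      rw [hB, ← hexp1]
      apply lintegral_mono
      intro t
      calc ENNReal.ofReal (Real.exp (-(s*t))) * G t
          ≤ ENNReal.ofReal (Real.exp (-(s*t))) * 1 := mul_le_mul_right (hG1 t) _
        _ = ENNReal.ofReal (Real.exp (-(s*t))) := by rw [mul_one]
    exact ne_top_of_le_ne_top ENNReal.ofReal_ne_top hle
  -- layer cake : ofReal (1 - L) = ofReal s * B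
  have layer : ENNReal.ofReal (1 - L) = ENNReal.ofReal s * B := by
    have hii : ∀ w : ℝ, ∫ t in (0:ℝ)..w, s * Real.exp (-(s*t)) = 1 - Real.exp (-(s*w)) := by
      intro w
      have hfun : (fun t : ℝ => Real.exp (-(s*t))) = fun t : ℝ => Real.exp ((-s)*t) := by
        funext t; ring_nf
      rw [intervalIntegral.integral_const_mul, hfun,
        intervalIntegral.integral_comp_mul_left (fun x => Real.exp x) (neg_ne_zero.mpr hs.ne')]
      rw [integral_exp]
      simp only [smul_eq_mul, mul_zero, Real.exp_zero, neg_mul]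
      have hs0 : s ≠ 0 := ne_of_gt hs
      linear_combination (1 - Real.exp (-(s * w))) * mul_inv_cancel₀ hs0
    have hmain := lintegral_comp_eq_lintegral_meas_lt_mul P
      (f := W) (g := fun t => s * Real.exp (-(s*t)))
      (Filter.Eventually.of_forall hWnn) hWmeas.aemeasurable
      (fun t _ht => (Continuous.intervalIntegrable (by continuity) 0 t))
      (Filter.Eventually.of_forall (fun t => mul_nonneg hs.le (Real.exp_pos _).le))
    simp only [hii] at hmain
    have hnn1 : 0 ≤ᵐ[P] fun ω => (1:ℝ) - Real.exp (-(s * W ω)) := by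
      filter_upwards with ω
      have := hexp_le_one ω
      simp only [Pi.zero_apply]
      linarith
    have hlhs : ∫⁻ ω, ENNReal.ofReal (1 - Real.exp (-(s * W ω))) ∂P
        = ENNReal.ofReal (1 - L) := by
      rw [← ofReal_integral_eq_lintegral_ofReal hint1 hnn1, h1mL]
    rw [hlhs] at hmain
    rw [hmain, hB, ← lintegral_const_mul' _ _ ENNReal.ofReal_ne_top]
    apply lintegral_congr
    intro t
    rw [ENNReal.ofReal_mul hs.le]
    ring
  -- Gamma integral
  have hgammapos : (0:ℝ) < Real.Gamma (1/β) := Real.Gamma_pos_of_pos hibpos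
  set c : ℝ := (1/s) ^ (1/β) * Real.Gamma (1/β) with hc
  have hcpos : 0 < c := by
    apply mul_pos _ hgammapos
    exact Real.rpow_pos_of_pos (by positivity) _
  have hCint : IntegrableOn (fun v : ℝ => Real.exp (-(s*v)) * v ^ (-(1/α))) (Ioi 0) := by
    have h := integrableOn_rpow_mul_exp_neg_mul_rpow (p := 1) (s := -(1/α)) (b := s)
      (by linarith) one_pos hs
    apply h.congr_fun ?_ measurableSet_Ioi
    intro x _hx
    simp only [Real.rpow_one, neg_mul]
    exact mul_comm _ _
  have hC : ∫⁻ v in Ioi (0:ℝ), ENNReal.ofReal (Real.exp (-(s*v)) * v ^ (-(1/α)))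
      = ENNReal.ofReal c := by
    have hCval : ∫ v in Ioi (0:ℝ), Real.exp (-(s*v)) * v ^ (-(1/α)) = c := by
      have h := Real.integral_rpow_mul_exp_neg_mul_Ioi (a := 1/β) (r := s) hibpos hs
      rw [show (1/β - 1 : ℝ) = -(1/α) by linarith] at h
      rw [hc, ← h]
      apply setIntegral_congr_fun measurableSet_Ioi
      intro x _hx
      exact mul_comm _ _
    have hCnn : 0 ≤ᵐ[volume.restrict (Ioi (0:ℝ))]
        fun v => Real.exp (-(s*v)) * v ^ (-(1/α)) := by
      filter_upwards [ae_restrict_mem measurableSet_Ioi] with v hv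
      exact mul_nonneg (Real.exp_pos _).le (Real.rpow_nonneg (le_of_lt hv) _)
    rw [← ofReal_integral_eq_lintegral_ofReal hCint hCnn, hCval]
  -- the convolution / Fubini step : A = ofReal c * B
  have conv : A = ENNReal.ofReal c * B := by
    set K : ℝ → ℝ → ℝ≥0∞ := fun t v =>
      {p : ℝ × ℝ | 0 < p.2 ∧ p.2 < p.1}.indicator
        (fun p => ENNReal.ofReal (Real.exp (-(s*p.1))) * G (p.1 - p.2)
          * ENNReal.ofReal (p.2 ^ (-(1/α)))) (t, v) with hK
    have hKmeas : Measurable (Function.uncurry K) := by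
      have huncurry : Function.uncurry K = {p : ℝ × ℝ | 0 < p.2 ∧ p.2 < p.1}.indicator
          (fun p => ENNReal.ofReal (Real.exp (-(s*p.1))) * G (p.1 - p.2)
            * ENNReal.ofReal (p.2 ^ (-(1/α)))) := by
        funext p
        rw [Function.uncurry, hK]
      rw [huncurry]
      apply Measurable.indicator
      · apply Measurable.mul
        · apply Measurable.mul
          · exact (Real.measurable_exp.comp (measurable_fst.const_mul s).neg).ennreal_ofReal
          · exact hGmeas.comp (measurable_fst.sub measurable_snd)
        · exact (hrpowmeas.comp measurable_snd).ennreal_ofReal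
      · exact (measurableSet_lt measurable_const measurable_snd).inter
          (measurableSet_lt measurable_snd measurable_fst)
    have step1 : ∫⁻ t, ∫⁻ v, K t v ∂volume ∂volume = A := by
      have inner : ∀ t, ∫⁻ v, K t v ∂volume
          = (Ioi (0:ℝ)).indicator
            (fun t => ENNReal.ofReal (Real.exp (-(s*t))) * Fm t) t := by
        intro t
        rcases le_or_gt t 0 with h | h
        · rw [indicator_of_notMem (by simpa using h)]
          have hz : ∀ v, K t v = 0 := by
            intro v
            apply indicator_of_notMem
            rintro ⟨h1, h2⟩
            simp only at h1 h2
            linarith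
          simp [hz]
        · rw [indicator_of_mem (mem_Ioi.mpr h)]
          have hfun : (fun v => K t v) = (Ioo (0:ℝ) t).indicator
              (fun v => ENNReal.ofReal (Real.exp (-(s*t)))
                * (G (t - v) * ENNReal.ofReal (v ^ (-(1/α))))) := by
            funext v
            by_cases hv : v ∈ Ioo (0:ℝ) t
            · rw [indicator_of_mem hv]
              have hmem : ((t, v) : ℝ × ℝ) ∈ {p : ℝ × ℝ | 0 < p.2 ∧ p.2 < p.1} :=
                ⟨hv.1, hv.2⟩
              rw [show K t v = ENNReal.ofReal (Real.exp (-(s*t))) * G (t - v)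
                  * ENNReal.ofReal (v ^ (-(1/α))) from indicator_of_mem hmem _]
              ring
            · rw [indicator_of_notMem hv]
              exact indicator_of_notMem (fun hmem => hv ⟨hmem.1, hmem.2⟩) _
          rw [hfun, lintegral_indicator measurableSet_Ioo,
            lintegral_const_mul' _ _ ENNReal.ofReal_ne_top, ← heq' t h]
      rw [lintegral_congr inner, lintegral_indicator measurableSet_Ioi]
    have step2 : ∫⁻ t, ∫⁻ v, K t v ∂volume ∂volume = ∫⁻ v, ∫⁻ t, K t v ∂volume ∂volume :=
      lintegral_lintegral_swap hKmeas.aemeasurable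
    have step3 : ∫⁻ v, ∫⁻ t, K t v ∂volume ∂volume = ENNReal.ofReal c * B := by
      have inner2 : ∀ v, ∫⁻ t, K t v ∂volume
          = (Ioi (0:ℝ)).indicator
            (fun v => ENNReal.ofReal (Real.exp (-(s*v)) * v ^ (-(1/α))) * B) v := by
        intro v
        rcases le_or_gt v 0 with h | h
        · rw [indicator_of_notMem (by simpa using h)]
          have hz : ∀ t, K t v = 0 := by
            intro t
            apply indicator_of_notMem
            rintro ⟨h1, h2⟩
            simp only at h1 h2
            linarith
          simp [hz]
        · rw [indicator_of_mem (mem_Ioi.mpr h)]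
          have htrans : ∫⁻ t, K t v ∂volume = ∫⁻ u, K (u + v) v ∂volume :=
            (lintegral_add_right_eq_self (fun t => K t v) v).symm
          rw [htrans]
          have hfun : (fun u => K (u + v) v) = (Ioi (0:ℝ)).indicator
              (fun u => (ENNReal.ofReal (Real.exp (-(s*v)) * v ^ (-(1/α))))
                * (ENNReal.ofReal (Real.exp (-(s*u))) * G u)) := by
            funext u
            by_cases hu : u ∈ Ioi (0:ℝ)
            · rw [indicator_of_mem hu]
              have hu' : (0:ℝ) < u := mem_Ioi.mp hu
              have hmem : ((u + v, v) : ℝ × ℝ) ∈ {p : ℝ × ℝ | 0 < p.2 ∧ p.2 < p.1} :=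
                ⟨h, show v < u + v by linarith⟩
              rw [show K (u + v) v = ENNReal.ofReal (Real.exp (-(s*(u+v)))) * G (u + v - v)
                  * ENNReal.ofReal (v ^ (-(1/α))) from indicator_of_mem hmem _]
              have hexp2 : Real.exp (-(s*(u+v))) = Real.exp (-(s*u)) * Real.exp (-(s*v)) := by
                rw [← Real.exp_add]
                congr 1
                ring
              rw [show u + v - v = u by ring, hexp2,
                ENNReal.ofReal_mul (Real.exp_pos _).le,
                ENNReal.ofReal_mul (Real.exp_pos _).le]
              ring
            · rw [indicator_of_notMem hu]
              refine indicator_of_notMem (fun hmem => hu (mem_Ioi.mpr ?_)) _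
              have h2 : v < u + v := hmem.2
              linarith
          rw [hfun, lintegral_indicator measurableSet_Ioi,
            lintegral_const_mul' _ _ ENNReal.ofReal_ne_top, ← hB]
      rw [lintegral_congr inner2, lintegral_indicator measurableSet_Ioi,
        lintegral_mul_const' _ _ hBfin, hC]
    rw [← step1, step2, step3]
  -- A + B = ofReal (1/s)
  have hAB : A + B = ENNReal.ofReal (1/s) := by
    rw [hA, hB, ← lintegral_add_left (f := fun t => ENNReal.ofReal (Real.exp (-(s*t))) * Fm t)
      (hg1meas.mul hFmeas)]
    rw [← hexp1]
    apply lintegral_congr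
    intro t
    rw [← mul_add, hFG, mul_one]
  -- extract real equations
  set b : ℝ := B.toReal with hb
  have hbnn : 0 ≤ b := ENNReal.toReal_nonneg
  have hBval : B = ENNReal.ofReal b := (ENNReal.ofReal_toReal hBfin).symm
  have hreal1 : c * b + b = 1/s := by
    have h := hAB
    rw [conv, hBval, ← ENNReal.ofReal_mul hcpos.le, ← ENNReal.ofReal_add
      (mul_nonneg hcpos.le hbnn) hbnn] at h
    exact (ENNReal.ofReal_eq_ofReal_iff (by positivity) (by positivity)).mp h
  have hreal2 : 1 - L = s * b := by
    have h := layer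
    rw [hBval, ← ENNReal.ofReal_mul hs.le] at h
    exact (ENNReal.ofReal_eq_ofReal_iff h1mL_nn (by positivity)).mp h
  -- final algebra
  have hc1 : c + 1 ≠ 0 := by positivity
  have h1 : s * (c * b + b) = 1 := by rw [hreal1]; field_simp
  have hsb : s * b = 1 / (c + 1) := by
    rw [eq_div_iff hc1]
    linear_combination h1
  have hLval : L = 1 - 1 / (c + 1) := by linarith [hreal2, hsb]
  rw [hLval, hc]
  have hpow : (1/s : ℝ) ^ (1/β) = (s ^ (1/β))⁻¹ := by
    rw [one_div, Real.inv_rpow hs.le]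
  rw [hpow]
  set p : ℝ := s ^ (1/β) with hp
  have hppos : 0 < p := Real.rpow_pos_of_pos hs _
  have hgne : Real.Gamma (1/β) ≠ 0 := hgammapos.ne'
  field_simp
  ring
end

section
/- Let (Xᵢ) be i.i.d. real random variables with partial sums Sₙ = X₁ + ⋯ + Xₙ, and suppose Σₙ P(|Sₙ| < εₙ) < ∞ for a sequence εₙ ↓ 0. Define τ̃_ε = min{n ≥ 1 : |Sₙ| < ε}. Then almost surely on the event Ω* = {Sₙ ≠ 0 for all n ≥ 1}, eventually (for all large n) τ̃_{εₙ} > n. -/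
open MeasureTheory ProbabilityTheory Filter Set Finset

/-- Borel–Cantelli step: if `(Xᵢ)` are i.i.d. with partial sums `Sₙ` and
`Σₙ P(|Sₙ| < εₙ) < ∞` for a positive sequence `εₙ ↓ 0`, then almost surely on
`Ω* = {Sₙ ≠ 0 ∀ n ≥ 1}` one eventually has `τ̃_{εₙ} > n`, i.e. `|S_k| ≥ εₙ` for
all `1 ≤ k ≤ n`. -/
theorem stmt8 {Ω : Type*} [MeasurableSpace Ω] (P : Measure Ω) [IsProbabilityMeasure P]
    (X : ℕ → Ω → ℝ) (hmeas : ∀ i, Measurable (X i))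
    (hindep : iIndepFun X P)
    (hident : ∀ i, IdentDistrib (X i) (X 0) P P)
    (S : ℕ → Ω → ℝ) (hS : ∀ n ω, S n ω = ∑ i ∈ Finset.range n, X i ω)
    (ε : ℕ → ℝ) (hεpos : ∀ n, 0 < ε n) (hεanti : Antitone ε)
    (hεlim : Tendsto ε atTop (nhds 0))
    (hsum : ∑' n, P {ω | |S n ω| < ε n} ≠ ⊤) :
    ∀ᵐ ω ∂P, (∀ n ≥ 1, S n ω ≠ 0) →
      ∀ᶠ n in atTop, ∀ k, 1 ≤ k → k ≤ n → ε n ≤ |S k ω| := by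
  have hBC := ae_eventually_notMem (μ := P) (s := fun n => {ω | |S n ω| < ε n}) hsum
  filter_upwards [hBC] with ω hω hne
  -- hω : eventually ω ∉ {|S n ω| < ε n}, i.e. eventually ε n ≤ |S n ω|
  obtain ⟨N, hN⟩ := eventually_atTop.mp hω
  have hN' : ∀ n ≥ N, ε n ≤ |S n ω| := by
    intro n hn
    have := hN n hn
    simp only [Set.mem_setOf_eq, not_lt] at this
    exact this
  -- a positive lower bound on the first N values
  set T : Finset ℝ := insert (1 : ℝ) ((Finset.Icc 1 N).image fun k => |S k ω|) with hT
  have hTne : T.Nonempty := ⟨1, Finset.mem_insert_self _ _⟩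
  set δ : ℝ := T.min' hTne with hδdef
  have hδpos : 0 < δ := by
    have hmem := T.min'_mem hTne
    rcases Finset.mem_insert.mp hmem with h | h
    · rw [hδdef]; rw [show T.min' hTne = (1:ℝ) from h]; norm_num
    · obtain ⟨k, hk, hkeq⟩ := Finset.mem_image.mp h
      have hk1 : 1 ≤ k := (Finset.mem_Icc.mp hk).1
      have := hne k hk1
      rw [hδdef, ← hkeq]
      exact abs_pos.mpr this
  have hδle : ∀ k, 1 ≤ k → k ≤ N → δ ≤ |S k ω| := by
    intro k hk1 hkN
    apply Finset.min'_le
    exact Finset.mem_insert_of_mem (Finset.mem_image.mpr ⟨k, Finset.mem_Icc.mpr ⟨hk1, hkN⟩, rfl⟩)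
  have hev1 : ∀ᶠ n in atTop, ε n < δ := hεlim.eventually (gt_mem_nhds hδpos)
  filter_upwards [hev1, eventually_ge_atTop N] with n hεn hnN k hk1 hkn
  by_cases hkN : k ≤ N
  · exact le_trans hεn.le (hδle k hk1 hkN)
  · have hk : N ≤ k := le_of_not_ge hkN
    exact le_trans (hεanti hkn) (hN' k hk)
end

section
/- Let (Xᵢ) be i.i.d. real random variables with partial sums Sₙ, fix ε > 0, n ≥ 1, and integers 1 ≤ m ≤ n. Define τ̃_{2ε} = min{k ≥ 1 : |S_k| < 2ε} and the pairwise disjoint events E_k = {|S_k| < ε and |S_j − S_k| > 2ε for all j = k+1,…,n}. Then 1 ≥ Σ_{k=m}^{n} P(|S_k| < ε) · P(τ̃_{2ε} > n − k). -/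
open MeasureTheory ProbabilityTheory Filter Set Finset

/-- The joint law of `r` consecutive variables of an i.i.d. sequence, starting at index `k`,
is the product of the common law. -/
lemma stmt9_aux_map_pi {Ω : Type*} [MeasurableSpace Ω] (P : Measure Ω) [IsProbabilityMeasure P]
    (X : ℕ → Ω → ℝ) (hmeas : ∀ i, Measurable (X i))
    (hindep : iIndepFun X P)
    (hident : ∀ i, IdentDistrib (X i) (X 0) P P) (k r : ℕ) :
    Measure.map (fun ω (i : Fin r) => X (k + i) ω) P
      = Measure.pi (fun _ : Fin r => P.map (X 0)) := by
  classical
  have hW : Measurable (fun ω (i : Fin r) => X (k + i) ω) :=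
    measurable_pi_lambda _ fun i => hmeas _
  have hprob : IsProbabilityMeasure (P.map (X 0)) :=
    Measure.isProbabilityMeasure_map (hmeas 0).aemeasurable
  refine (Measure.pi_eq fun s hs => ?_).symm
  rw [Measure.map_apply hW (MeasurableSet.univ_pi hs)]
  set sets : ℕ → Set ℝ := fun i =>
    if h : k ≤ i ∧ i < k + r then s ⟨i - k, by omega⟩ else Set.univ with hsets
  have hsetsmeas : ∀ i ∈ Finset.Ico k (k + r), MeasurableSet (sets i) := by
    intro i _
    simp only [hsets]
    split_ifs with h
    · exact hs _
    · exact MeasurableSet.univ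
  have hpre : (fun ω (i : Fin r) => X (k + i) ω) ⁻¹' Set.pi Set.univ s
      = ⋂ i ∈ Finset.Ico k (k + r), X i ⁻¹' sets i := by
    ext ω
    simp only [Set.mem_preimage, Set.mem_pi, Set.mem_univ, forall_true_left,
      Set.mem_iInter, Finset.mem_Ico, hsets]
    constructor
    · intro h i hi
      rw [dif_pos ⟨hi.1, hi.2⟩]
      have := h ⟨i - k, by omega⟩
      simpa only [Nat.add_sub_cancel' hi.1] using this
    · intro h j
      have := h (k + j) ⟨Nat.le_add_right _ _, by omega⟩
      rw [dif_pos ⟨Nat.le_add_right _ _, by omega⟩] at this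
      simpa only [Nat.add_sub_cancel_left, Fin.eta] using this
  rw [hpre, hindep.measure_inter_preimage_eq_mul (Finset.Ico k (k + r)) hsetsmeas]
  rw [Finset.prod_Ico_eq_prod_range]
  simp only [Nat.add_sub_cancel_left]
  have h1 : ∀ i ∈ Finset.range r, P (X (k + i) ⁻¹' sets (k + i))
      = (fun i => if h : i < r then (P.map (X 0)) (s ⟨i, h⟩) else 1) i := by
    intro i hi
    rw [Finset.mem_range] at hi
    simp only [dif_pos hi]
    have h2 : sets (k + i) = s ⟨i, hi⟩ := by
      simp only [hsets]
      rw [dif_pos ⟨Nat.le_add_right _ _, by omega⟩]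
      ext
      simp
    rw [h2, ← Measure.map_apply (hmeas _) (hs _), (hident (k + i)).map_eq]
  rw [Finset.prod_congr rfl h1, ← Fin.prod_univ_eq_prod_range]
  exact Finset.prod_congr rfl fun i _ => by simp

/-- The first `k` variables of an i.i.d. sequence are independent from the next `r`. -/
lemma stmt9_aux_indep {Ω : Type*} [MeasurableSpace Ω] (P : Measure Ω) [IsProbabilityMeasure P]
    (X : ℕ → Ω → ℝ) (hmeas : ∀ i, Measurable (X i))
    (hindep : iIndepFun X P) (k r : ℕ) :
    IndepFun (fun ω (i : Fin k) => X i ω) (fun ω (i : Fin r) => X (k + i) ω) P := by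
  classical
  have h := hindep.indepFun_finset (Finset.range k) (Finset.Ico k (k + r))
    (Finset.disjoint_left.mpr (by intro a ha hb; rw [Finset.mem_range] at ha
                                  rw [Finset.mem_Ico] at hb; omega)) hmeas
  let g₁ : ((i : ↥(Finset.range k)) → ℝ) → (Fin k → ℝ) :=
    fun v i => v ⟨(i : ℕ), Finset.mem_range.mpr i.isLt⟩
  let g₂ : ((i : ↥(Finset.Ico k (k + r))) → ℝ) → (Fin r → ℝ) :=
    fun v i => v ⟨k + (i : ℕ), Finset.mem_Ico.mpr ⟨Nat.le_add_right _ _, by omega⟩⟩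
  have hg₁ : Measurable g₁ := measurable_pi_lambda _ fun i => measurable_pi_apply _
  have hg₂ : Measurable g₂ := measurable_pi_lambda _ fun i => measurable_pi_apply _
  exact h.comp hg₁ hg₂

/-- Dvoretzky–Erdős estimate: for an i.i.d. walk `Sₙ`, `ε > 0` and `1 ≤ m ≤ n`,
`1 ≥ Σ_{k=m}^n P(|S_k| < ε) · P(τ̃_{2ε} > n-k)`, where `τ̃_{2ε} > j` means that
`|S_i| ≥ 2ε` for all `1 ≤ i ≤ j`. -/
theorem stmt9 {Ω : Type*} [MeasurableSpace Ω] (P : Measure Ω) [IsProbabilityMeasure P]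
    (X : ℕ → Ω → ℝ) (hmeas : ∀ i, Measurable (X i))
    (hindep : iIndepFun X P)
    (hident : ∀ i, IdentDistrib (X i) (X 0) P P)
    (S : ℕ → Ω → ℝ) (hS : ∀ n ω, S n ω = ∑ i ∈ Finset.range n, X i ω)
    (ε : ℝ) (hε : 0 < ε) (m n : ℕ) (hm : 1 ≤ m) (hmn : m ≤ n) :
    ∑ k ∈ Finset.Icc m n,
        (P {ω | |S k ω| < ε}).toReal *
          (P {ω | ∀ i, 1 ≤ i → i ≤ n - k → 2 * ε ≤ |S i ω|}).toReal ≤ 1 := by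
  classical
  have hSm : ∀ j, Measurable (S j) := by
    intro j
    have hj : S j = fun ω => ∑ i ∈ Finset.range j, X i ω := funext fun ω => hS j ω
    rw [hj]
    exact Finset.measurable_sum _ fun i _ => hmeas i
  set A : ℕ → Set Ω := fun k => {ω | |S k ω| < ε} with hA
  set B : ℕ → Set Ω :=
    fun k => {ω | ∀ j, 1 ≤ j → j ≤ n - k → 2 * ε ≤ |S (k + j) ω - S k ω|} with hB
  have hAmeas : ∀ k, MeasurableSet (A k) := fun k =>
    measurableSet_lt (hSm k).abs measurable_const
  have hBmeas : ∀ k, MeasurableSet (B k) := by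
    intro k
    have hBk : B k = ⋂ (j : ℕ) (_ : 1 ≤ j) (_ : j ≤ n - k),
        {ω | 2 * ε ≤ |S (k + j) ω - S k ω|} := by
      ext ω; simp [hB]
    rw [hBk]
    exact MeasurableSet.iInter fun j => MeasurableSet.iInter fun _ =>
      MeasurableSet.iInter fun _ =>
        measurableSet_le measurable_const ((hSm _).sub (hSm k)).abs
  have hkey : ∀ a b : ℕ, b ≤ n → a < b → Disjoint (A a ∩ B a) (A b ∩ B b) := by
    intro a b hbn hlt
    refine Set.disjoint_left.mpr fun ω hωa hωb => ?_
    have hAa : |S a ω| < ε := hωa.1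
    have hAb : |S b ω| < ε := hωb.1
    have hBa := hωa.2 (b - a) (by omega) (by omega)
    rw [Nat.add_sub_cancel' (le_of_lt hlt)] at hBa
    have habs : |S b ω - S a ω| ≤ |S b ω| + |S a ω| := abs_sub _ _
    linarith
  have hdisj : (↑(Finset.Icc m n) : Set ℕ).PairwiseDisjoint fun k => A k ∩ B k := by
    intro a ha b hb hab
    simp only [Finset.coe_Icc, Set.mem_Icc] at ha hb
    rcases lt_or_gt_of_ne hab with h | h
    · exact hkey a b hb.2 h
    · exact (hkey b a ha.2 h).symm
  have hsum_le : ∑ k ∈ Finset.Icc m n, P (A k ∩ B k) ≤ 1 := by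
    rw [← measure_biUnion_finset hdisj fun k _ => (hAmeas k).inter (hBmeas k)]
    exact prob_le_one
  have hterm : ∀ k ∈ Finset.Icc m n,
      (P {ω | |S k ω| < ε}).toReal *
        (P {ω | ∀ i, 1 ≤ i → i ≤ n - k → 2 * ε ≤ |S i ω|}).toReal
        = (P (A k ∩ B k)).toReal := by
    intro k hk
    rw [Finset.mem_Icc] at hk
    set D : Set (Fin (n - k) → ℝ) := {v | ∀ j, 1 ≤ j → j ≤ n - k →
        2 * ε ≤ |∑ i ∈ Finset.range j, (if h : i < n - k then v ⟨i, h⟩ else 0)|} with hD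
    have hDmeas : MeasurableSet D := by
      have hDi : D = ⋂ (j : ℕ) (_ : 1 ≤ j) (_ : j ≤ n - k),
          {v : Fin (n - k) → ℝ |
            2 * ε ≤ |∑ i ∈ Finset.range j, (if h : i < n - k then v ⟨i, h⟩ else 0)|} := by
        ext v; simp [hD]
      rw [hDi]
      refine MeasurableSet.iInter fun j => MeasurableSet.iInter fun _ =>
        MeasurableSet.iInter fun _ => ?_
      refine measurableSet_le measurable_const (Measurable.abs ?_)
      refine Finset.measurable_sum _ fun i _ => ?_
      split_ifs with h
      · exact measurable_pi_apply _
      · exact measurable_const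
    have hBpre : B k = (fun ω (i : Fin (n - k)) => X (k + i) ω) ⁻¹' D := by
      ext ω
      simp only [hB, hD, Set.mem_setOf_eq, Set.mem_preimage]
      refine forall_congr' fun j => imp_congr_right fun hj1 => imp_congr_right fun hj2 => ?_
      have e1 : S (k + j) ω - S k ω = ∑ i ∈ Finset.range j, X (k + i) ω := by
        rw [hS, hS, ← Finset.sum_Ico_eq_sub _ (Nat.le_add_right k j),
          Finset.sum_Ico_eq_sum_range]
        simp
      have e2 : (∑ i ∈ Finset.range j,
            (if h : i < n - k then X (k + ((⟨i, h⟩ : Fin (n - k)) : ℕ)) ω else 0))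
          = ∑ i ∈ Finset.range j, X (k + i) ω := by
        refine Finset.sum_congr rfl fun i hi => ?_
        rw [Finset.mem_range] at hi
        rw [dif_pos (by omega)]
      rw [e1, ← e2]
    have hCpre : {ω | ∀ i, 1 ≤ i → i ≤ n - k → 2 * ε ≤ |S i ω|}
        = (fun ω (i : Fin (n - k)) => X (0 + i) ω) ⁻¹' D := by
      ext ω
      simp only [hD, Set.mem_setOf_eq, Set.mem_preimage]
      refine forall_congr' fun j => imp_congr_right fun hj1 => imp_congr_right fun hj2 => ?_
      have e2 : (∑ i ∈ Finset.range j,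
            (if h : i < n - k then X (0 + ((⟨i, h⟩ : Fin (n - k)) : ℕ)) ω else 0))
          = S j ω := by
        rw [hS]
        refine Finset.sum_congr rfl fun i hi => ?_
        rw [Finset.mem_range] at hi
        rw [dif_pos (by omega)]
        simp
      rw [← e2]
    have hWmeas : ∀ k' : ℕ, Measurable (fun ω (i : Fin (n - k)) => X (k' + i) ω) :=
      fun k' => measurable_pi_lambda _ fun i => hmeas _
    have hPB : P {ω | ∀ i, 1 ≤ i → i ≤ n - k → 2 * ε ≤ |S i ω|} = P (B k) := by
      rw [hCpre, hBpre, ← Measure.map_apply (hWmeas 0) hDmeas,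
        ← Measure.map_apply (hWmeas k) hDmeas,
        stmt9_aux_map_pi P X hmeas hindep hident 0 (n - k),
        stmt9_aux_map_pi P X hmeas hindep hident k (n - k)]
    have hApre : A k = (fun ω (i : Fin k) => X i ω) ⁻¹' {v : Fin k → ℝ | |∑ i, v i| < ε} := by
      ext ω
      simp only [hA, Set.mem_setOf_eq, Set.mem_preimage]
      rw [hS, ← Fin.sum_univ_eq_sum_range]
    have hindAB : P (A k ∩ B k) = P (A k) * P (B k) := by
      rw [hApre, hBpre]
      exact (stmt9_aux_indep P X hmeas hindep k (n - k)).measure_inter_preimage_eq_mul _ _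
        (measurableSet_lt (Measurable.abs (by fun_prop)) measurable_const) hDmeas
    have hPA : P {ω | |S k ω| < ε} = P (A k) := rfl
    rw [hPA, hPB, hindAB, ENNReal.toReal_mul]
  rw [Finset.sum_congr rfl hterm,
    ← ENNReal.toReal_sum fun k _ => measure_ne_top P _]
  calc (∑ k ∈ Finset.Icc m n, P (A k ∩ B k)).toReal
      ≤ (1 : ENNReal).toReal := ENNReal.toReal_mono ENNReal.one_ne_top hsum_le
    _ = 1 := ENNReal.toReal_one
end

section
/- Suppose (Aₙ) is regularly varying of index 1 (the case α = 1) with Σ 1/Aₙ = ∞ and G(n) = Σ_{k=1}^n 1/A_k. Then n/Aₙ = o(G(n)) as n → ∞, and moreover G is slowly varying: G(2n)/G(n) → 1, hence G(2n) − G(n) = o(G(n)). -/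
open Filter Set Finset MeasureTheory

set_option maxHeartbeats 1000000

lemma aux_egorov (A : ℕ → ℝ)
    (hreg : ∀ l > (0:ℝ), Tendsto (fun n : ℕ => A ⌊l * n⌋₊ / A n) atTop (nhds l)) :
    ∃ (E : Set ℝ) (N : ℕ), E ⊆ Set.Ioo (1:ℝ) 5 ∧
      volume (Set.Ioo (1:ℝ) 5 \ E) ≤ ENNReal.ofReal (1/10) ∧
      ∀ n ≥ N, ∀ l ∈ E, |A ⌊l * n⌋₊ / A n - l| < 1/2 := by
  have hmeas : ∀ n : ℕ, StronglyMeasurable (fun l : ℝ => A ⌊l * n⌋₊ / A n) := by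
    intro n
    have h1 : Measurable (fun l : ℝ => l * (n:ℝ)) := measurable_id.mul_const _
    exact ((measurable_from_nat (f := A)).comp h1.nat_floor |>.div_const _).stronglyMeasurable
  obtain ⟨t, hts, htm, htμ, hunif⟩ :=
    MeasureTheory.tendstoUniformlyOn_of_ae_tendsto
      (f := fun (n : ℕ) (l : ℝ) => A ⌊l * n⌋₊ / A n) (g := fun l => l)
      (μ := volume) (s := Set.Ioo (1:ℝ) 5)
      hmeas stronglyMeasurable_id measurableSet_Ioo (by simp)
      (by
        filter_upwards with l hl
        exact hreg l (lt_trans one_pos hl.1))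
      (by norm_num : (0:ℝ) < 1/10)
  obtain ⟨N, hN⟩ := (Metric.tendstoUniformlyOn_iff.mp hunif (1/2) (by norm_num)).exists_forall_of_atTop
  refine ⟨Set.Ioo 1 5 \ t, N, Set.diff_subset, ?_, ?_⟩
  · refine le_trans (measure_mono ?_) htμ
    intro x hx
    simp only [Set.mem_diff, Set.mem_Ioo] at hx ⊢
    by_contra hxt
    exact hx.2 ⟨hx.1, hxt⟩
  · intro n hn l hl
    have := hN n hn l hl
    rw [Real.dist_eq, abs_sub_comm] at this
    exact this

lemma aux_base (E : Set ℝ) (hE : E ⊆ Set.Ioo 1 5)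
    (hμ : volume (Set.Ioo (1:ℝ) 5 \ E) ≤ ENNReal.ofReal (1/10))
    (n k : ℕ) (hn : 100 ≤ n) (hk1 : n < 2 * k) (hk2 : k ≤ n) :
    ∃ j : ℕ, n / 4 < j ∧ j ≤ n / 2 ∧ (∃ l ∈ E, ⌊l * (j:ℝ)⌋₊ = k) ∧ (∃ l ∈ E, ⌊l * (j:ℝ)⌋₊ = n) := by
  classical
  set T : Finset ℕ := Finset.Ioc (n/4) (n/2) with hT
  -- basic real bounds for j ∈ T
  have hTj : ∀ j ∈ T, (n:ℝ)/4 < j ∧ (j:ℝ) ≤ (n:ℝ)/2 ∧ 0 < j := by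
    intro j hj
    rw [hT, Finset.mem_Ioc] at hj
    obtain ⟨h1, h2⟩ := hj
    have h1' : n < j * 4 := (Nat.div_lt_iff_lt_mul (by norm_num)).mp h1
    have h2' : j * 2 ≤ n := (Nat.le_div_iff_mul_le (by norm_num)).mp h2
    have hj0 : 0 < j := by omega
    refine ⟨?_, ?_, hj0⟩
    · have : (n:ℝ) < j * 4 := by exact_mod_cast h1'
      linarith
    · have : (j:ℝ) * 2 ≤ n := by exact_mod_cast h2'
      linarith
  have key : ∀ m : ℕ, n / 2 < m → m ≤ n →
      (((T.filter (fun j : ℕ => ¬ ∃ l ∈ E, ⌊l * (j:ℝ)⌋₊ = m)).card : ℝ)) ≤ (n:ℝ) / 20 := by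
    intro m hm1 hm2
    set bad : Finset ℕ := T.filter (fun j : ℕ => ¬ ∃ l ∈ E, ⌊l * (j:ℝ)⌋₊ = m) with hbad
    have hmn : (n:ℝ)/2 < (m:ℝ) := by
      have : n < 2 * m := by omega
      have : (n:ℝ) < 2 * m := by exact_mod_cast this
      linarith
    have hjm : ∀ j ∈ T, j < m := by
      intro j hj
      rw [hT, Finset.mem_Ioc] at hj
      omega
    -- any l in the interval has floor m
    have hfloor : ∀ j ∈ T, ∀ l ∈ Set.Ico ((m:ℝ)/j) (((m:ℝ)+1)/j), ⌊l * (j:ℝ)⌋₊ = m := by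
      intro j hj l hl
      obtain ⟨_, _, hj0⟩ := hTj j hj
      have hj0' : (0:ℝ) < j := by exact_mod_cast hj0
      obtain ⟨hl1, hl2⟩ := hl
      have h1 : (m:ℝ) ≤ l * j := by
        rw [div_le_iff₀ hj0'] at hl1; linarith
      have h2 : l * j < (m:ℝ) + 1 := by
        rw [lt_div_iff₀ hj0'] at hl2; linarith
      have hl0 : 0 ≤ l * (j:ℝ) := le_trans (by positivity) h1
      exact Nat.floor_eq_iff hl0 |>.mpr ⟨h1, h2⟩
    -- bad intervals sit inside (Ioo 1 5) \ E
    have hsub : ∀ j ∈ bad, Set.Ico ((m:ℝ)/j) (((m:ℝ)+1)/j) ⊆ Set.Ioo (1:ℝ) 5 \ E := by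
      intro j hj
      rw [hbad, Finset.mem_filter] at hj
      obtain ⟨hjT, hjbad⟩ := hj
      obtain ⟨hj4, hj2, hj0⟩ := hTj j hjT
      have hj0' : (0:ℝ) < j := by exact_mod_cast hj0
      intro l hl
      constructor
      · constructor
        · have : (j:ℝ) < m := by linarith
          have h1 : (1:ℝ) < (m:ℝ)/j := (one_lt_div hj0').mpr this
          exact lt_of_lt_of_le h1 hl.1
        · have h5 : ((m:ℝ)+1)/j < 5 := by
            rw [div_lt_iff₀ hj0']
            have hmr : (m:ℝ) ≤ n := by exact_mod_cast hm2
            have hnr : (100:ℝ) ≤ n := by exact_mod_cast hn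
            linarith
          exact lt_trans hl.2 h5
      · intro hlE
        exact hjbad ⟨l, hlE, hfloor j hjT l hl⟩
    -- the intervals are pairwise disjoint
    have hdisj : (bad : Set ℕ).PairwiseDisjoint
        (fun j : ℕ => Set.Ico ((m:ℝ)/j) (((m:ℝ)+1)/j)) := by
      have hsep : ∀ j j' : ℕ, j ∈ bad → j' ∈ bad → j < j' →
          Disjoint (Set.Ico ((m:ℝ)/j) (((m:ℝ)+1)/j)) (Set.Ico ((m:ℝ)/j') (((m:ℝ)+1)/j')) := by
        intro j j' hj hj' hlt
        rw [hbad, Finset.mem_filter] at hj hj'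
        have hj0 : 0 < j := (hTj j hj.1).2.2
        have hj0' : (0:ℝ) < j := by exact_mod_cast hj0
        have hj'0 : (0:ℝ) < j' := by exact_mod_cast (hTj j' hj'.1).2.2
        have hjm' : j < m := hjm j hj.1
        have hle : ((m:ℝ)+1)/j' ≤ (m:ℝ)/j := by
          rw [div_le_div_iff₀ hj'0 hj0']
          have h1 : (m+1) * j ≤ m * j' := by
            calc (m+1) * j = m * j + j := by ring
            _ ≤ m * j + m := by omega
            _ = m * (j+1) := by ring
            _ ≤ m * j' := by exact Nat.mul_le_mul_left m (by omega)
          have := (by exact_mod_cast h1 : ((m:ℝ)+1) * j ≤ (m:ℝ) * j')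
          linarith
        rw [Set.disjoint_left]
        rintro x ⟨hx1, _⟩ ⟨_, hx4⟩
        linarith
      intro j hj j' hj' hne
      rcases lt_or_gt_of_ne hne with h | h
      · exact hsep j j' hj hj' h
      · exact (hsep j' j hj' hj h).symm
    -- measure bound
    have hmeasle : ∑ j ∈ bad, volume (Set.Ico ((m:ℝ)/j) (((m:ℝ)+1)/j)) ≤ ENNReal.ofReal (1/10) := by
      rw [← MeasureTheory.measure_biUnion_finset hdisj (fun j _ => measurableSet_Ico)]
      refine le_trans (measure_mono ?_) hμ
      exact Set.iUnion₂_subset hsub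
    have hvol : ∀ j ∈ bad, volume (Set.Ico ((m:ℝ)/j) (((m:ℝ)+1)/j)) = ENNReal.ofReal (1/(j:ℝ)) := by
      intro j hj
      rw [Real.volume_Ico]
      congr 1
      rw [div_sub_div_same]
      ring_nf
    rw [Finset.sum_congr rfl hvol] at hmeasle
    rw [← ENNReal.ofReal_sum_of_nonneg (fun j _ => by positivity)] at hmeasle
    have hsum : ∑ j ∈ bad, (1:ℝ)/(j:ℝ) ≤ 1/10 :=
      (ENNReal.ofReal_le_ofReal_iff (by norm_num)).mp hmeasle
    have hterm : ∀ j ∈ bad, (2:ℝ)/(n:ℝ) ≤ 1/(j:ℝ) := by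
      intro j hj
      rw [hbad, Finset.mem_filter] at hj
      obtain ⟨hj4, hj2, hj0⟩ := hTj j hj.1
      have hj0' : (0:ℝ) < j := by exact_mod_cast hj0
      have hn0 : (0:ℝ) < n := by positivity
      rw [div_le_div_iff₀ hn0 hj0']
      linarith
    have hcard := Finset.card_nsmul_le_sum bad (fun j => (1:ℝ)/(j:ℝ)) ((2:ℝ)/(n:ℝ)) hterm
    rw [nsmul_eq_mul] at hcard
    have hn0 : (0:ℝ) < n := by positivity
    have := le_trans hcard hsum
    have h2 : (bad.card:ℝ)*2/n ≤ 1/10 := by rw [mul_div_assoc]; exact this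
    rw [div_le_div_iff₀ hn0 (by norm_num : (0:ℝ) < 10)] at h2
    rw [le_div_iff₀ (by norm_num : (0:ℝ) < 20)]
    linarith
  have hk' : n / 2 < k := by omega
  have hn' : n / 2 < n := by omega
  set badK := T.filter (fun j : ℕ => ¬ ∃ l ∈ E, ⌊l * (j:ℝ)⌋₊ = k) with hbK
  set badN := T.filter (fun j : ℕ => ¬ ∃ l ∈ E, ⌊l * (j:ℝ)⌋₊ = n) with hbN
  have cK : badK.card * 20 ≤ n := by
    have := key k hk' hk2
    rw [le_div_iff₀ (by norm_num : (0:ℝ) < 20)] at this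
    exact_mod_cast this
  have cN : badN.card * 20 ≤ n := by
    have := key n hn' le_rfl
    rw [le_div_iff₀ (by norm_num : (0:ℝ) < 20)] at this
    exact_mod_cast this
  have hTcard : T.card = n/2 - n/4 := Nat.card_Ioc _ _
  have hnotsub : ¬ T ⊆ badK ∪ badN := by
    intro hss
    have h1 := Finset.card_le_card hss
    have h2 := Finset.card_union_le badK badN
    omega
  obtain ⟨j, hjT, hjnot⟩ := Finset.not_subset.mp hnotsub
  rw [Finset.mem_union] at hjnot
  push_neg at hjnot
  obtain ⟨hj1, hj2⟩ := hjnot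
  rw [hbK, Finset.mem_filter] at hj1
  rw [hbN, Finset.mem_filter] at hj2
  rw [hT, Finset.mem_Ioc] at hjT
  refine ⟨j, hjT.1, hjT.2, ?_, ?_⟩
  · by_contra hc
    exact hj1 ⟨Finset.mem_Ioc.mpr hjT, hc⟩
  · by_contra hc
    exact hj2 ⟨Finset.mem_Ioc.mpr hjT, hc⟩

lemma aux_block (A : ℕ → ℝ) (hA : ∀ n ≥ 1, 0 < A n)
    (hreg : ∀ l > (0:ℝ), Tendsto (fun n : ℕ => A ⌊l * n⌋₊ / A n) atTop (nhds l)) :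
    ∃ N₀ : ℕ, 1 ≤ N₀ ∧ ∀ n ≥ N₀, ∀ k, n < 2 * k → k ≤ n → A k ≤ 12 * A n := by
  obtain ⟨E, N, hE, hμ, hN⟩ := aux_egorov A hreg
  refine ⟨max 100 (4 * N), le_trans (by norm_num) (le_max_left _ _), ?_⟩
  intro n hn k hk1 hk2
  have hn100 : 100 ≤ n := le_trans (le_max_left _ _) hn
  obtain ⟨j, hj1, hj2, ⟨l, hlE, hlk⟩, ⟨l', hl'E, hl'n⟩⟩ := aux_base E hE hμ n k hn100 hk1 hk2
  have hjN : N ≤ j := by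
    have h4 : 4 * N ≤ n := le_trans (le_max_right _ _) hn
    omega
  have hj1' : 1 ≤ j := by omega
  have hAj : 0 < A j := hA j hj1'
  have hAn : 0 < A n := hA n (by omega)
  have hb1 := hN j hjN l hlE
  have hb2 := hN j hjN l' hl'E
  rw [hlk] at hb1
  rw [hl'n] at hb2
  obtain ⟨hl1, hl5⟩ := hE hlE
  obtain ⟨hl'1, hl'5⟩ := hE hl'E
  rw [abs_lt] at hb1 hb2
  have h1 : A k / A j < 11/2 := by linarith [hb1.2]
  have h2 : 1/2 < A n / A j := by linarith [hb2.1]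
  have h1' : A k < 11/2 * A j := by
    rwa [div_lt_iff₀ hAj] at h1 <;> linarith
  have h2' : A j < 2 * A n := by
    rw [lt_div_iff₀ hAj] at h2; linarith
  linarith

section
variable (A : ℕ → ℝ)

lemma aux_floor_pow (j n : ℕ) : ⌊((1:ℝ)/2^j) * n⌋₊ = n / 2^j := by
  have h : ((1:ℝ)/2^j) * n = (n:ℝ) / ((2^j : ℕ):ℝ) := by push_cast; ring
  rw [h, Nat.floor_div_natCast, Nat.floor_natCast]

lemma aux_decay (hA : ∀ n ≥ 1, 0 < A n)
    (hreg : ∀ l > (0:ℝ), Tendsto (fun n : ℕ => A ⌊l * n⌋₊ / A n) atTop (nhds l)) (j : ℕ) :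
    ∀ᶠ n : ℕ in atTop, A (n / 2^j) ≤ 2 * (1/2^j) * A n := by
  set l : ℝ := (1:ℝ)/2^j with hl
  have hl0 : 0 < l := by positivity
  have htd := hreg l hl0
  rw [Metric.tendsto_nhds] at htd
  filter_upwards [htd l hl0, eventually_ge_atTop 1] with n hdist hn1
  rw [Real.dist_eq, abs_lt] at hdist
  have hratio : A ⌊l * n⌋₊ / A n < 2 * l := by linarith [hdist.2]
  have hAn : 0 < A n := hA n hn1
  rw [div_lt_iff₀ hAn] at hratio
  rw [← aux_floor_pow j n]
  calc A ⌊((1:ℝ)/2^j) * n⌋₊ ≤ 2 * l * A n := le_of_lt (by rw [hl]; exact hratio)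
  _ = 2 * (1/2^j) * A n := by rw [hl]

lemma aux_split (f : ℕ → ℝ) (n J : ℕ) :
    ∑ j ∈ Finset.range J, ∑ k ∈ Finset.Ioc (n/2^(j+1)) (n/2^j), f k
      = ∑ k ∈ Finset.Ioc (n/2^J) n, f k := by
  induction J with
  | zero => simp
  | succ J ih =>
    rw [Finset.sum_range_succ, ih, add_comm]
    refine Finset.sum_Ioc_consecutive _ ?_ ?_
    · exact Nat.div_le_div_left (Nat.pow_le_pow_right (by norm_num) (by omega)) (by positivity)
    · exact Nat.div_le_self _ _

end

lemma aux_key (A : ℕ → ℝ) (hA : ∀ n ≥ 1, 0 < A n)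
    (hreg : ∀ l > (0:ℝ), Tendsto (fun n : ℕ => A ⌊l * n⌋₊ / A n) atTop (nhds l))
    (G : ℕ → ℝ) (hG : ∀ n, G n = ∑ k ∈ Finset.Icc 1 n, 1 / A k)
    (K : ℝ) (hK : 0 < K) :
    ∀ᶠ n : ℕ in atTop, K * ((n:ℝ) / A n) ≤ G n := by
  obtain ⟨N₀, hN₀1, hblock⟩ := aux_block A hA hreg
  set J : ℕ := ⌈96 * K⌉₊ + 1 with hJ
  have hJK : 96 * K ≤ J := by
    have := Nat.le_ceil (96 * K)
    push_cast [hJ]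
    linarith
  have hdecayall : ∀ᶠ n : ℕ in atTop, ∀ j ∈ Finset.range J, A (n / 2^j) ≤ 2 * (1/2^j) * A n :=
    Filter.eventually_all_finset _ |>.mpr (fun j _ => aux_decay A hA hreg j)
  filter_upwards [hdecayall, eventually_ge_atTop (2^J * (N₀ + 4)), eventually_ge_atTop (3 * 2^(J+2))]
    with n hdecay hnN hn3
  -- positivity of A n etc.
  have hn1 : 1 ≤ n := by
    have h0 : 0 < 2^J * (N₀ + 4) := by positivity
    omega
  have hAn : 0 < A n := hA n hn1
  -- each block contributes at least n/(96 A n)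
  have hblockbound : ∀ j ∈ Finset.range J,
      (n:ℝ)/(96 * A n) ≤ ∑ k ∈ Finset.Ioc (n/2^(j+1)) (n/2^j), 1 / A k := by
    intro j hj
    rw [Finset.mem_range] at hj
    set m : ℕ := n / 2^j with hm
    have hmN : N₀ + 4 ≤ m := by
      have h1 : 2^j * (2^(J-j) * (N₀+4)) ≤ n := by
        rw [← mul_assoc, ← pow_add]
        have : j + (J - j) = J := by omega
        rw [this]; exact hnN
      have h2 : 2^(J-j) * (N₀+4) ≤ n / 2^j := Nat.le_div_iff_mul_le (by positivity) |>.mpr (by linarith [h1])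
      have h3 : (N₀+4) ≤ 2^(J-j) * (N₀+4) := Nat.le_mul_of_pos_left _ (by positivity)
      omega
    have hm2 : n / 2^(j+1) = m / 2 := by
      rw [hm, Nat.div_div_eq_div_mul, pow_succ]
    have hAm : 0 < A m := hA m (by omega)
    -- each term in the block is at least 1/(12 * A m)
    have hterm : ∀ k ∈ Finset.Ioc (n/2^(j+1)) (n/2^j), 1/(12 * A m) ≤ 1 / A k := by
      intro k hk
      rw [Finset.mem_Ioc, hm2] at hk
      have hk1 : m < 2 * k := by omega
      have hk2 : k ≤ m := hk.2
      have hAk : 0 < A k := hA k (by omega)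
      have := hblock m (by omega) k hk1 hk2
      exact one_div_le_one_div_of_le hAk (by linarith)
    have hcard := Finset.card_nsmul_le_sum _ _ _ hterm
    rw [nsmul_eq_mul] at hcard
    refine le_trans ?_ hcard
    -- card bound
    have hcardval : (Finset.Ioc (n/2^(j+1)) (n/2^j)).card = m - m/2 := by
      rw [Nat.card_Ioc, hm2]
    have hmreal : (n:ℝ)/2^j - 1 ≤ (m:ℝ) := by
      have hfl : ((n / 2^j : ℕ):ℝ) = (⌊(n:ℝ)/((2^j:ℕ):ℝ)⌋₊ : ℝ) := by
        rw [Nat.floor_div_natCast, Nat.floor_natCast]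
      have h2 := Nat.sub_one_lt_floor ((n:ℝ)/((2^j:ℕ):ℝ))
      rw [hm, hfl]
      push_cast at h2 ⊢
      linarith
    have hcardreal : (m:ℝ)/2 - 1 ≤ ((Finset.Ioc (n/2^(j+1)) (n/2^j)).card : ℝ) := by
      rw [hcardval]
      have h1 : m / 2 ≤ m := Nat.div_le_self _ _
      have h2 : (m:ℝ)/2 - 1 ≤ ((m / 2:ℕ):ℝ) := by
        have hfl : ((m / 2 : ℕ):ℝ) = (⌊(m:ℝ)/((2:ℕ):ℝ)⌋₊ : ℝ) := by
          rw [Nat.floor_div_natCast, Nat.floor_natCast]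
        have h2' := Nat.sub_one_lt_floor ((m:ℝ)/((2:ℕ):ℝ))
        rw [hfl]
        push_cast at h2' ⊢
        linarith
      have h4 : ((m - m/2 : ℕ):ℝ) = (m:ℝ) - ((m/2:ℕ):ℝ) := by
        have : m/2 ≤ m := h1
        push_cast [this]; ring
      rw [h4]
      have h5 : ((m/2:ℕ):ℝ) ≤ (m:ℝ)/2 := by
        have := Nat.div_mul_le_self m 2
        have : ((m/2:ℕ):ℝ) * 2 ≤ (m:ℝ) := by exact_mod_cast this
        linarith
      linarith
    -- A m bound
    have hAmb : A m ≤ 2 * (1/2^j) * A n := hdecay j (Finset.mem_range.mpr hj)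
    -- combine
    have hp2 : (0:ℝ) < 2^j := by positivity
    have hnreal : 3 * 2^(j+2) ≤ (n:ℝ) := by
      have h1 : 3 * 2^(j+2) ≤ 3 * 2^(J+2) :=
        Nat.mul_le_mul_left 3 (Nat.pow_le_pow_right (by norm_num) (by omega))
      have h2 : 3 * 2^(j+2) ≤ n := le_trans h1 hn3
      exact_mod_cast h2
    have hcard4 : (n:ℝ)/2^(j+2) ≤ ((Finset.Ioc (n/2^(j+1)) (n/2^j)).card : ℝ) := by
      have e1 : (n:ℝ)/2^j = 4 * ((n:ℝ)/2^(j+2)) := by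
        rw [pow_succ, pow_succ]; field_simp; ring
      have hx : (3:ℝ) ≤ (n:ℝ)/2^(j+2) := by
        rw [le_div_iff₀ (by positivity)]
        linarith [hnreal]
      have hstep : (n:ℝ)/2^(j+2) ≤ (m:ℝ)/2 - 1 := by
        linarith [hmreal, e1, hx]
      linarith [hcardreal]
    have hApos : (0:ℝ) < 12 * A m := by linarith
    calc (n:ℝ)/(96 * A n) = (n:ℝ)/2^(j+2) * (1 / (12 * (2 * (1/2^j) * A n))) := by
          field_simp
          ring
    _ ≤ ((Finset.Ioc (n/2^(j+1)) (n/2^j)).card : ℝ) * (1 / (12 * A m)) := by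
          apply mul_le_mul hcard4 _ (by positivity) (by positivity)
          apply one_div_le_one_div_of_le hApos
          nlinarith [hAmb]
  -- sum the blocks
  have hsum : (J:ℝ) * ((n:ℝ)/(96 * A n)) ≤ ∑ k ∈ Finset.Ioc (n/2^J) n, 1 / A k := by
    rw [← aux_split (fun k => 1 / A k) n J]
    calc (J:ℝ) * ((n:ℝ)/(96 * A n))
        = ∑ _j ∈ Finset.range J, (n:ℝ)/(96 * A n) := by
          rw [Finset.sum_const, Finset.card_range, nsmul_eq_mul]
    _ ≤ _ := Finset.sum_le_sum hblockbound
  have hGle : ∑ k ∈ Finset.Ioc (n/2^J) n, 1 / A k ≤ G n := by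
    rw [hG n]
    apply Finset.sum_le_sum_of_subset_of_nonneg
    · intro k hk
      rw [Finset.mem_Ioc] at hk
      rw [Finset.mem_Icc]
      exact ⟨lt_of_le_of_lt (Nat.zero_le _) hk.1, hk.2⟩
    · intro k hk _
      rw [Finset.mem_Icc] at hk
      have := hA k hk.1
      positivity
  have hfinal : K * ((n:ℝ)/A n) ≤ (J:ℝ) * ((n:ℝ)/(96 * A n)) := by
    have hn0 : (0:ℝ) ≤ (n:ℝ)/A n := by positivity
    have : K * ((n:ℝ)/A n) = (96 * K) * ((n:ℝ)/(96 * A n)) := by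
      field_simp
    rw [this]
    apply mul_le_mul_of_nonneg_right hJK (by positivity)
  linarith

/-- If `(Aₙ)` is positive and regularly varying of index `1` with
`G(n) = Σ_{k=1}^n 1/A_k → ∞`, then `n/Aₙ = o(G(n))` and `G` is slowly varying:
`G(2n)/G(n) → 1`, hence `G(2n) - G(n) = o(G(n))`. -/
theorem stmt16 (A : ℕ → ℝ) (hA : ∀ n ≥ 1, 0 < A n)
    (hreg : ∀ l > (0:ℝ), Tendsto (fun n : ℕ => A ⌊l * n⌋₊ / A n) atTop (nhds l))
    (G : ℕ → ℝ) (hG : ∀ n, G n = ∑ k ∈ Finset.Icc 1 n, 1 / A k)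
    (hdiv : Tendsto G atTop atTop) :
    Tendsto (fun n : ℕ => (n : ℝ) / (A n * G n)) atTop (nhds 0)
    ∧ Tendsto (fun n : ℕ => G (2 * n) / G n) atTop (nhds 1)
    ∧ Tendsto (fun n : ℕ => (G (2 * n) - G n) / G n) atTop (nhds 0) := by
  have hGnonneg : ∀ n, 0 ≤ G n := by
    intro n
    rw [hG n]
    apply Finset.sum_nonneg
    intro k hk
    rw [Finset.mem_Icc] at hk
    have := hA k hk.1
    positivity
  have hGmono : Monotone G := by
    apply monotone_nat_of_le_succ
    intro n
    rw [hG n, hG (n+1), Finset.sum_Icc_succ_top (by omega : 1 ≤ n + 1)]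
    have := hA (n+1) (by omega)
    have h0 : (0:ℝ) ≤ 1 / A (n+1) := by positivity
    linarith
  have hGpos : ∀ᶠ n : ℕ in atTop, 0 < G n := hdiv.eventually_gt_atTop 0
  have hIccIoc : ∀ m : ℕ, Finset.Icc 1 m = Finset.Ioc 0 m := by
    intro m; ext x; simp [Finset.mem_Icc, Finset.mem_Ioc]; omega
  have hGdiff : ∀ n : ℕ, G (2*n) - G n = ∑ k ∈ Finset.Ioc n (2*n), 1 / A k := by
    intro n
    rw [hG (2*n), hG n, hIccIoc, hIccIoc]
    have := Finset.sum_Ioc_consecutive (fun k => 1 / A k) (Nat.zero_le n) (by omega : n ≤ 2*n)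
    linarith
  -- Goal 1
  have goal1 : Tendsto (fun n : ℕ => (n : ℝ) / (A n * G n)) atTop (nhds 0) := by
    rw [NormedAddCommGroup.tendsto_nhds_zero]
    intro ε hε
    have hkey := aux_key A hA hreg G hG (2/ε) (by positivity)
    filter_upwards [hkey, hGpos, eventually_ge_atTop 1] with n hk hGp hn1
    have hAn : 0 < A n := hA n hn1
    have hx : (n:ℝ)/A n ≤ ε/2 * G n := by
      have h2 := mul_le_mul_of_nonneg_left hk (le_of_lt (show (0:ℝ) < ε/2 by positivity))
      calc (n:ℝ)/A n = (ε/2) * ((2/ε) * ((n:ℝ)/A n)) := by field_simp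
      _ ≤ (ε/2) * G n := h2
    have h1 : (n:ℝ)/(A n * G n) ≤ ε/2 := by
      rw [← div_div, div_le_iff₀ hGp]
      exact hx
    have h0 : (0:ℝ) ≤ (n:ℝ)/(A n * G n) := by positivity
    rw [Real.norm_eq_abs, abs_of_nonneg h0]
    linarith
  -- Goal 2
  have goal2 : Tendsto (fun n : ℕ => G (2*n) / G n) atTop (nhds 1) := by
    rw [Metric.tendsto_nhds]
    intro ε hε
    set δ : ℝ := min (1/2) (ε/4) with hδ
    have hδ0 : 0 < δ := lt_min (by norm_num) (by positivity)
    have hδh : δ ≤ 1/2 := min_le_left _ _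
    have hδε : δ ≤ ε/4 := min_le_right _ _
    obtain ⟨N₁, hN₁⟩ := (aux_key A hA hreg G hG (1/δ) (by positivity)).exists_forall_of_atTop
    filter_upwards [hGpos, eventually_ge_atTop (max N₁ 1)] with n hGp hn
    have hn1 : 1 ≤ n := le_trans (le_max_right _ _) hn
    have hnN : N₁ ≤ n := le_trans (le_max_left _ _) hn
    have hterm : ∀ k ∈ Finset.Ioc n (2*n), 1/A k ≤ δ * G (2*n) / n := by
      intro k hk
      rw [Finset.mem_Ioc] at hk
      have hk1 : 1 ≤ k := by omega
      have hAk : 0 < A k := hA k hk1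
      have hkey := hN₁ k (by omega)
      have hkpos : (0:ℝ) < k := by exact_mod_cast hk1
      have hnpos : (0:ℝ) < n := by exact_mod_cast hn1
      have e1 : 1/A k = (δ/k) * ((1/δ)*((k:ℝ)/A k)) := by
        field_simp
      have e2 : 1/A k ≤ (δ/k) * G k := by
        rw [e1]
        exact mul_le_mul_of_nonneg_left hkey (by positivity)
      have e3 : (δ/k) * G k = δ * (G k / k) := by ring
      have e4 : G k / k ≤ G (2*n) / n := by
        apply div_le_div₀ (hGnonneg (2*n)) (hGmono hk.2) hnpos
        exact_mod_cast le_of_lt hk.1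
      calc 1/A k ≤ δ * (G k / k) := by rw [← e3]; exact e2
      _ ≤ δ * (G (2*n) / n) := mul_le_mul_of_nonneg_left e4 (le_of_lt hδ0)
      _ = δ * G (2*n) / n := by ring
    have hsum : G (2*n) - G n ≤ δ * G (2*n) := by
      rw [hGdiff n]
      have hcard : (Finset.Ioc n (2*n)).card = n := by
        rw [Nat.card_Ioc]; omega
      have := Finset.sum_le_card_nsmul _ _ _ hterm
      rw [hcard, nsmul_eq_mul] at this
      have hnpos : (0:ℝ) < n := by exact_mod_cast hn1
      calc ∑ k ∈ Finset.Ioc n (2*n), 1/A k ≤ (n:ℝ) * (δ * G (2*n) / n) := this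
      _ = δ * G (2*n) := by field_simp
    have hup : G n ≤ G (2*n) := hGmono (by omega)
    have h1δ : (0:ℝ) < 1 - δ := by linarith
    have hratio1 : 1 ≤ G (2*n)/G n := (le_div_iff₀ hGp).mpr (by linarith)
    have hratio2 : G (2*n)/G n ≤ 1/(1-δ) := by
      rw [div_le_div_iff₀ hGp h1δ]
      linarith
    have hfrac : 1/(1-δ) ≤ 1 + 2*δ := by
      rw [div_le_iff₀ h1δ]
      nlinarith
    rw [Real.dist_eq, abs_of_nonneg (by linarith : (0:ℝ) ≤ G (2*n)/G n - 1)]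
    have : G (2*n)/G n - 1 ≤ 2*δ := by linarith
    linarith
  -- Goal 3
  have goal3 : Tendsto (fun n : ℕ => (G (2*n) - G n) / G n) atTop (nhds 0) := by
    have h1 : Tendsto (fun n : ℕ => G (2*n)/G n - 1) atTop (nhds 0) := by
      have := goal2.sub_const 1
      simpa using this
    apply h1.congr'
    filter_upwards [hGpos] with n hGp
    field_simp
  exact ⟨goal1, goal2, goal3⟩
end
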